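/- arXiv:1305.5912 — 5 statements merged into one kernel-verified Lean document; each statement's English description precedes it below -/
import Mathlib

section
/- Let α, β, γ be real numbers with 0 < α < 1 < β < γ, and set x = (1+α)/(1-α), y = (β+γ)/(γ-β), z = (2(α+βγ) - (1+α)(β+γ)) / ((1-α)(γ-β)). Then β = ((xy+z) + √(x²+y²+z²+2xyz-1)) / ((x+1)(y+1)). -/
/-- Let `0 < α < 1 < β < γ` and set `x = (1+α)/(1-α)`, `y = (β+γ)/(γ-β)`,
`z = (2(α+βγ) - (1+α)(β+γ)) / ((1-α)(γ-β))`. Then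
`β = ((xy+z) + √(x²+y²+z²+2xyz-1)) / ((x+1)(y+1))`. -/
theorem stmt_7 (α β γ x y z : ℝ) (h0 : 0 < α) (h1 : α < 1) (h2 : 1 < β) (h3 : β < γ)
    (hx : x = (1 + α) / (1 - α))
    (hy : y = (β + γ) / (γ - β))
    (hz : z = (2 * (α + β * γ) - (1 + α) * (β + γ)) / ((1 - α) * (γ - β))) :
    β = ((x * y + z) + Real.sqrt (x ^ 2 + y ^ 2 + z ^ 2 + 2 * x * y * z - 1)) /
        ((x + 1) * (y + 1)) := by
  have hu : (0:ℝ) < 1 - α := by linarith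
  have hv : (0:ℝ) < γ - β := by linarith
  have hγ : (0:ℝ) < γ := by linarith
  have hu' : (1:ℝ) - α ≠ 0 := ne_of_gt hu
  have hv' : γ - β ≠ 0 := ne_of_gt hv
  have hbg : (0:ℝ) < β * γ - α := by nlinarith
  subst hx hy hz
  have key : ((1 + α) / (1 - α)) ^ 2 + ((β + γ) / (γ - β)) ^ 2 +
      ((2 * (α + β * γ) - (1 + α) * (β + γ)) / ((1 - α) * (γ - β))) ^ 2 +
      2 * ((1 + α) / (1 - α)) * ((β + γ) / (γ - β)) *
        ((2 * (α + β * γ) - (1 + α) * (β + γ)) / ((1 - α) * (γ - β))) - 1 =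
      (2 * (β * γ - α) / ((1 - α) * (γ - β))) ^ 2 := by
    field_simp
    ring
  rw [key, Real.sqrt_sq (by positivity)]
  field_simp
  ring
end

section
/- Let α, β, γ be real numbers with 0 < α < 1 < β < γ, and set x = (1+α)/(1-α), y = (β+γ)/(γ-β), z = (2(α+βγ) - (1+α)(β+γ)) / ((1-α)(γ-β)). Then γ = ((xy+z) + √(x²+y²+z²+2xyz-1)) / ((x+1)(y-1)). -/
/-- Let `0 < α < 1 < β < γ` and set `x = (1+α)/(1-α)`, `y = (β+γ)/(γ-β)`,
`z = (2(α+βγ) - (1+α)(β+γ)) / ((1-α)(γ-β))`. Then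
`γ = ((xy+z) + √(x²+y²+z²+2xyz-1)) / ((x+1)(y-1))`. -/
theorem stmt_8 (α β γ x y z : ℝ) (h0 : 0 < α) (h1 : α < 1) (h2 : 1 < β) (h3 : β < γ)
    (hx : x = (1 + α) / (1 - α))
    (hy : y = (β + γ) / (γ - β))
    (hz : z = (2 * (α + β * γ) - (1 + α) * (β + γ)) / ((1 - α) * (γ - β))) :
    γ = ((x * y + z) + Real.sqrt (x ^ 2 + y ^ 2 + z ^ 2 + 2 * x * y * z - 1)) /
        ((x + 1) * (y - 1)) := by
  have hd1 : (1:ℝ) - α ≠ 0 := by linarith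
  have hd2 : γ - β ≠ 0 := by linarith
  have hd1' : (0:ℝ) < 1 - α := by linarith
  have hd2' : (0:ℝ) < γ - β := by linarith
  have hbg : (0:ℝ) < β * γ - α := by nlinarith
  have hsq : x ^ 2 + y ^ 2 + z ^ 2 + 2 * x * y * z - 1
      = (2 * (β * γ - α) / ((1 - α) * (γ - β))) ^ 2 := by
    subst hx hy hz; field_simp; ring
  rw [hsq, Real.sqrt_sq (by positivity)]
  subst hx hy hz
  have hb : (0:ℝ) < β := by linarith
  have hy1 : (β + γ) / (γ - β) - 1 = 2 * β / (γ - β) := by field_simp; ring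
  have hyp : (0:ℝ) < (β + γ) / (γ - β) - 1 := by rw [hy1]; positivity
  have hxp : (0:ℝ) < (1 + α) / (1 - α) + 1 := by positivity
  rw [eq_div_iff (by positivity)]
  field_simp
  ring
end

section
/- Let x, y, z be real numbers, each strictly greater than 1, and define α = (x-1)/(x+1), β = ((xy+z) + √(x²+y²+z²+2xyz-1)) / ((x+1)(y+1)), γ = ((xy+z) + √(x²+y²+z²+2xyz-1)) / ((x+1)(y-1)). Then 0 < α < 1 < β < γ, and these values satisfy x = (1+α)/(1-α), y = (β+γ)/(γ-β), and z = (2(α+βγ) - (1+α)(β+γ)) / ((1-α)(γ-β)). -/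
set_option maxHeartbeats 1000000


/-- Let `x, y, z > 1` and define
`α = (x-1)/(x+1)`,
`β = ((xy+z) + √(x²+y²+z²+2xyz-1)) / ((x+1)(y+1))`,
`γ = ((xy+z) + √(x²+y²+z²+2xyz-1)) / ((x+1)(y-1))`.
Then `0 < α < 1 < β < γ`, and `x = (1+α)/(1-α)`, `y = (β+γ)/(γ-β)`,
`z = (2(α+βγ) - (1+α)(β+γ)) / ((1-α)(γ-β))`. -/
theorem stmt_9 (x y z : ℝ) (hx : 1 < x) (hy : 1 < y) (hz : 1 < z)
    (α β γ : ℝ)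
    (hα : α = (x - 1) / (x + 1))
    (hβ : β = ((x * y + z) + Real.sqrt (x ^ 2 + y ^ 2 + z ^ 2 + 2 * x * y * z - 1)) /
        ((x + 1) * (y + 1)))
    (hγ : γ = ((x * y + z) + Real.sqrt (x ^ 2 + y ^ 2 + z ^ 2 + 2 * x * y * z - 1)) /
        ((x + 1) * (y - 1))) :
    (0 < α ∧ α < 1 ∧ 1 < β ∧ β < γ) ∧
    x = (1 + α) / (1 - α) ∧
    y = (β + γ) / (γ - β) ∧
    z = (2 * (α + β * γ) - (1 + α) * (β + γ)) / ((1 - α) * (γ - β)) := by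
  set s := Real.sqrt (x ^ 2 + y ^ 2 + z ^ 2 + 2 * x * y * z - 1) with hs
  have hD : (0:ℝ) ≤ x ^ 2 + y ^ 2 + z ^ 2 + 2 * x * y * z - 1 := by
    nlinarith [mul_pos (mul_pos (show (0:ℝ) < x by linarith) (show (0:ℝ) < y by linarith))
      (show (0:ℝ) < z by linarith), sq_nonneg x, sq_nonneg y, sq_nonneg z]
  have hs0 : 0 ≤ s := Real.sqrt_nonneg _
  have hsq : s * s = x ^ 2 + y ^ 2 + z ^ 2 + 2 * x * y * z - 1 := Real.mul_self_sqrt hD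
  have hx1 : (0:ℝ) < x + 1 := by linarith
  have hy1 : (0:ℝ) < y + 1 := by linarith
  have hym : (0:ℝ) < y - 1 := by linarith
  have hxm : (0:ℝ) < x - 1 := by linarith
  have hN : (0:ℝ) < x * y + z + s := by nlinarith
  have hslt : x + y + 1 - z < s := by nlinarith [sq_nonneg (s - (x + y + 1 - z)), sq_nonneg (s + (x + y + 1 - z)), mul_pos (mul_pos (show (0:ℝ) < z - 1 by linarith) hx1) hy1]
  have hβ1 : 1 < β := by
    rw [hβ]
    rw [lt_div_iff₀ (by positivity)]
    nlinarith
  have hβγ : β < γ := by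
    rw [hβ, hγ]
    apply div_lt_div_of_pos_left hN (by positivity)
    nlinarith
  have hα0 : 0 < α := by rw [hα]; positivity
  have hα1 : α < 1 := by rw [hα, div_lt_one hx1]; linarith
  refine ⟨⟨hα0, hα1, hβ1, hβγ⟩, ?_, ?_, ?_⟩
  · rw [hα]; field_simp; ring
  · rw [hβ, hγ]
    rw [eq_div_iff (by
      intro h
      have := sub_eq_zero.mp h
      rw [div_eq_div_iff (by positivity) (by positivity)] at this
      nlinarith)]
    field_simp
    ring
  · rw [hα, hβ, hγ]
    rw [eq_div_iff (by
      have h1 : (0:ℝ) < 1 - (x - 1) / (x + 1) := by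
        rw [sub_pos, div_lt_one hx1]; linarith
      have h2 : ((x * y + z) + s) / ((x + 1) * (y - 1)) - ((x * y + z) + s) / ((x + 1) * (y + 1)) > 0 := by
        rw [gt_iff_lt, sub_pos]
        apply div_lt_div_of_pos_left hN (by positivity)
        nlinarith
      positivity)]
    field_simp
    linear_combination (-2) * hsq
end

section
/- The map Φ sending a triple (α, β, γ) of real numbers satisfying 0 < α < 1 < β < γ to the triple (x, y, z) = ((1+α)/(1-α), (β+γ)/(γ-β), (2(α+βγ) - (1+α)(β+γ)) / ((1-α)(γ-β))) is a bijection from the set {(α, β, γ) ∈ ℝ³ : 0 < α < 1 < β < γ} onto the set {(x, y, z) ∈ ℝ³ : x > 1, y > 1, z > 1}. -/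
/-- The map `Φ : (α, β, γ) ↦ (x, y, z)` defined by
`x = (1+α)/(1-α)`, `y = (β+γ)/(γ-β)`, `z = (2(α+βγ) - (1+α)(β+γ)) / ((1-α)(γ-β))`
is a bijection from `{(α, β, γ) : 0 < α < 1 < β < γ}` onto
`{(x, y, z) : x > 1, y > 1, z > 1}`. -/
theorem stmt_10 :
    Set.BijOn
      (fun p : ℝ × ℝ × ℝ =>
        ((1 + p.1) / (1 - p.1),
         (p.2.1 + p.2.2) / (p.2.2 - p.2.1),
         (2 * (p.1 + p.2.1 * p.2.2) - (1 + p.1) * (p.2.1 + p.2.2)) /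
           ((1 - p.1) * (p.2.2 - p.2.1))))
      {p : ℝ × ℝ × ℝ | 0 < p.1 ∧ p.1 < 1 ∧ 1 < p.2.1 ∧ p.2.1 < p.2.2}
      {q : ℝ × ℝ × ℝ | 1 < q.1 ∧ 1 < q.2.1 ∧ 1 < q.2.2} := by
  refine ⟨?_, ?_, ?_⟩
  · -- MapsTo
    rintro ⟨a, b, c⟩ ⟨ha0, ha1, hb, hbc⟩
    simp only [Set.mem_setOf_eq] at *
    have h1 : (0:ℝ) < 1 - a := by linarith
    have h2 : (0:ℝ) < c - b := by linarith
    refine ⟨(one_lt_div h1).2 (by linarith), (one_lt_div h2).2 (by linarith), ?_⟩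
    show 1 < (2 * (a + b * c) - (1 + a) * (b + c)) / ((1 - a) * (c - b))
    rw [one_lt_div (by positivity)]
    nlinarith [mul_pos (show (0:ℝ) < b - 1 by linarith) (show (0:ℝ) < c - a by linarith)]
  · -- InjOn
    rintro ⟨a, b, c⟩ ⟨ha0, ha1, hb, hbc⟩ ⟨a', b', c'⟩ ⟨ha0', ha1', hb', hbc'⟩ heq
    simp only [Set.mem_setOf_eq, Prod.mk.injEq] at *
    obtain ⟨e1, e2, e3⟩ := heq
    have h1 : (0:ℝ) < 1 - a := by linarith
    have h1' : (0:ℝ) < 1 - a' := by linarith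
    have h2 : (0:ℝ) < c - b := by linarith
    have h2' : (0:ℝ) < c' - b' := by linarith
    have ea : a = a' := by
      have := (div_eq_div_iff h1.ne' h1'.ne').mp e1
      nlinarith [this]
    subst ea
    have hs : (b + c) * (c' - b') = (b' + c') * (c - b) :=
      (div_eq_div_iff h2.ne' h2'.ne').mp e2
    have hE3 : (2 * (a + b * c) - (1 + a) * (b + c)) * ((1 - a) * (c' - b')) =
        (2 * (a + b' * c') - (1 + a) * (b' + c')) * ((1 - a) * (c - b)) :=
      (div_eq_div_iff (by positivity) (by positivity)).mp e3
    have hE3' : (2 * (a + b * c) - (1 + a) * (b + c)) * (c' - b') =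
        (2 * (a + b' * c') - (1 + a) * (b' + c')) * (c - b) := by
      apply mul_left_cancel₀ h1.ne'
      linear_combination hE3
    have key : ((c - b) - (c' - b')) * (2 * (b * c') + 2 * (b' * c) - 4 * a) = 0 := by
      linear_combination 2 * hE3' - (b + c + b' + c' - 2 - 2 * a) * hs
    have hdd : c - b = c' - b' := by
      have hpos : 0 < 2 * (b * c') + 2 * (b' * c) - 4 * a := by nlinarith
      rcases mul_eq_zero.mp key with h | h
      · linarith
      · linarith
    have hss : b + c = b' + c' := by
      have h := hs
      rw [hdd] at h
      exact mul_right_cancel₀ h2'.ne' h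
    refine ⟨rfl, by linarith, by linarith⟩
  · -- SurjOn
    rintro ⟨x, y, z⟩ ⟨hx, hy, hz⟩
    simp only [Set.mem_setOf_eq] at *
    have hx1 : (0:ℝ) < x + 1 := by linarith
    have hy2 : (0:ℝ) < y^2 - 1 := by nlinarith
    have hden : (0:ℝ) < (x+1) * (y^2-1) := mul_pos hx1 hy2
    have hDarg : (0:ℝ) < x^2 + y^2 + z^2 + 2*x*y*z - 1 := by
      nlinarith [mul_pos (mul_pos (show (0:ℝ)<x by linarith) (show (0:ℝ)<y by linarith)) (show (0:ℝ)<z by linarith)]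
    set D := Real.sqrt (x^2 + y^2 + z^2 + 2*x*y*z - 1) with hDdef
    have hDpos : 0 < D := Real.sqrt_pos.mpr hDarg
    have hD2 : D^2 = x^2 + y^2 + z^2 + 2*x*y*z - 1 := Real.sq_sqrt hDarg.le
    obtain ⟨d, hd⟩ : ∃ d : ℝ, d = 2*(x*y + z + D) / ((x+1)*(y^2-1)) := ⟨_, rfl⟩
    have hdpos : 0 < d := by
      rw [hd]
      apply div_pos _ hden
      nlinarith [mul_pos (show (0:ℝ)<x by linarith) (show (0:ℝ)<y by linarith)]
    have hkey : (x+1)*(y+1) < x*y + z + D := by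
      by_contra hcon
      push_neg at hcon
      nlinarith [hD2, mul_self_le_mul_self hDpos.le
        (show D ≤ (x+1)*(y+1) - (x*y+z) by linarith),
        mul_pos (mul_pos hx1 (show (0:ℝ) < y+1 by linarith)) (show (0:ℝ) < z-1 by linarith)]
    -- quadratic identity satisfied by d
    have hdden : d * ((x+1)*(y^2-1)) = 2*(x*y + z + D) := by
      rw [hd]; exact div_mul_cancel₀ _ hden.ne'
    have hq : (x+1)*(y^2-1)*d^2 - 4*(x*y+z)*d + 4*(x-1) = 0 := by
      have h3 : ((x+1)*(y^2-1)) * ((x+1)*(y^2-1)*d^2 - 4*(x*y+z)*d + 4*(x-1)) = 0 := by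
        linear_combination (d*((x+1)*(y^2-1)) + 2*(x*y+z+D) - 4*(x*y+z)) * hdden + 4*hD2
      exact (mul_eq_zero.mp h3).resolve_left hden.ne'
    have hb1 : 1 < (y-1)*d/2 := by
      rw [hd, show (y-1)*(2*(x*y+z+D)/((x+1)*(y^2-1)))/2 = ((y-1)*(x*y+z+D))/((x+1)*(y^2-1)) from by ring,
        one_lt_div hden]
      nlinarith [mul_lt_mul_of_pos_left hkey (show (0:ℝ) < y - 1 by linarith)]
    have hcb : (y+1)*d/2 - (y-1)*d/2 = d := by ring
    refine ⟨((x - 1)/(x+1), ((y-1)*d/2, (y+1)*d/2)), ⟨?_, ?_, ?_, ?_⟩, ?_⟩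
    · exact div_pos (by linarith) hx1
    · rw [div_lt_one hx1]; linarith
    · exact hb1
    · nlinarith
    · simp only [Prod.mk.injEq]
      have hane : 1 - (x-1)/(x+1) ≠ 0 := by
        rw [show 1 - (x-1)/(x+1) = 2/(x+1) from by field_simp; norm_num]
        positivity
      refine ⟨?_, ?_, ?_⟩
      · rw [div_eq_iff hane]
        field_simp
        ring
      · rw [show (y+1)*d/2 - (y-1)*d/2 = d from by ring, div_eq_iff hdpos.ne']
        ring
      · rw [show (y+1)*d/2 - (y-1)*d/2 = d from by ring,
          div_eq_iff (mul_ne_zero hane hdpos.ne')]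
        rw [show 1 - (x-1)/(x+1) = 2/(x+1) from by field_simp; norm_num]
        field_simp
        linear_combination hq
end

section
/- For all real numbers x, y, z each strictly greater than 1, the identity x² + y² + z² + 2xyz - 1 = (x + y + 1 - z)² + 2(z-1)(x+1)(y+1) holds; consequently x² + y² + z² + 2xyz - 1 > (x + y + 1 - z)², and therefore ((xy+z) + √(x²+y²+z²+2xyz-1)) / ((x+1)(y+1)) > 1. -/
/-- For all reals `x, y, z > 1`:
`x² + y² + z² + 2xyz - 1 = (x + y + 1 - z)² + 2(z-1)(x+1)(y+1)`;
consequently `x² + y² + z² + 2xyz - 1 > (x + y + 1 - z)²`, and therefore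
`((xy+z) + √(x²+y²+z²+2xyz-1)) / ((x+1)(y+1)) > 1`. -/
theorem stmt_11 (x y z : ℝ) (hx : 1 < x) (hy : 1 < y) (hz : 1 < z) :
    x ^ 2 + y ^ 2 + z ^ 2 + 2 * x * y * z - 1
      = (x + y + 1 - z) ^ 2 + 2 * (z - 1) * (x + 1) * (y + 1) ∧
    (x + y + 1 - z) ^ 2 < x ^ 2 + y ^ 2 + z ^ 2 + 2 * x * y * z - 1 ∧
    1 < ((x * y + z) + Real.sqrt (x ^ 2 + y ^ 2 + z ^ 2 + 2 * x * y * z - 1)) /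
        ((x + 1) * (y + 1)) := by
  have heq : x ^ 2 + y ^ 2 + z ^ 2 + 2 * x * y * z - 1
      = (x + y + 1 - z) ^ 2 + 2 * (z - 1) * (x + 1) * (y + 1) := by ring
  have hlt : (x + y + 1 - z) ^ 2 < x ^ 2 + y ^ 2 + z ^ 2 + 2 * x * y * z - 1 := by
    nlinarith [mul_pos (mul_pos (show (0:ℝ) < z - 1 by linarith) (show (0:ℝ) < x + 1 by linarith)) (show (0:ℝ) < y + 1 by linarith)]
  refine ⟨heq, hlt, ?_⟩
  have hden : (0:ℝ) < (x + 1) * (y + 1) := by nlinarith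
  rw [lt_div_iff₀ hden]
  have hs : Real.sqrt ((x + y + 1 - z) ^ 2)
      < Real.sqrt (x ^ 2 + y ^ 2 + z ^ 2 + 2 * x * y * z - 1) :=
    Real.sqrt_lt_sqrt (sq_nonneg _) hlt
  rw [Real.sqrt_sq_eq_abs] at hs
  have := le_abs_self (x + y + 1 - z)
  nlinarith
end
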